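/- For every β ∈ [0,1] and p01, p11 ∈ [0,1] (with no ordering assumption on p01, p11), every t ∈ {1,…,T}, every ω ∈ [0,1]^n, and every permutation σ of {1,…,n}, the optimal value dominates the value of the W-recursion applied to any rearrangement of the state: V_t(ω) ≥ W_t(ω_{σ(1)},…,ω_{σ(n)}). -/

import Mathlib

open Finset

noncomputable section

/-- The one-step belief update for an unobserved channel. -/
def tauF (p01 p11 : ℝ) (w : ℝ) : ℝ := w * p11 + (1 - w) * p01

/-- The set of admissible actions: subsets of `Fin n` of cardinality `k`. -/
def actions (n k : ℕ) : Finset (Finset (Fin n)) :=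
  (Finset.univ : Finset (Fin n)).powersetCard k

lemma actions_nonempty {n k : ℕ} (hk : k ≤ n) : (actions n k).Nonempty := by
  rw [actions, Finset.powersetCard_nonempty, Finset.card_univ, Fintype.card_fin]
  exact hk

/-- Number of `true` entries in a `{0,1}^k` realization. -/
def countTrue {k : ℕ} (l : Fin k → Bool) : ℕ :=
  (Finset.univ.filter fun i => l i = true).card

/-- `q(l; u) = ∏ u_i^{l_i} (1-u_i)^{1-l_i}`. -/
def qProb {k : ℕ} (u : Fin k → ℝ) (l : Fin k → Bool) : ℝ :=
  ∏ i : Fin k, if l i then u i else 1 - u i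

/-- The top `k` coordinates `(ω_{n-k+1}, …, ω_n)` of a length-`n` vector. -/
def topCoords {n k : ℕ} (hk : k ≤ n) (ω : Fin n → ℝ) : Fin k → ℝ :=
  fun i => ω ⟨n - k + i.val, by omega⟩

/-- The vector `v_l`: `k - m` copies of `p01`, then `τ(ω_1),…,τ(ω_{n-k})`,
then `m` copies of `p11`, where `m` is the number of ones in `l`. -/
def vl {n : ℕ} (k : ℕ) (p01 p11 : ℝ) (ω : Fin n → ℝ) (m : ℕ) : Fin n → ℝ :=
  fun j =>
    if j.val < k - m then p01
    else if j.val < n - m then tauF p01 p11 (ω ⟨j.val - (k - m), by omega⟩)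
    else p11

/-- The greedy-policy value functions `W`, indexed by the number of remaining
steps (`r = 0` corresponds to the terminal time `T`). -/
def Wval (n k : ℕ) (hk : k ≤ n) (p01 p11 β : ℝ) : ℕ → (Fin n → ℝ) → ℝ
  | 0, ω => ∑ i : Fin n, if n - k ≤ i.val then ω i else 0
  | r + 1, ω =>
      (∑ i : Fin n, if n - k ≤ i.val then ω i else 0) +
        β * ∑ l : Fin k → Bool,
          qProb (topCoords hk ω) l *
            Wval n k hk p01 p11 β r (vl k p01 p11 ω (countTrue l))

/-- The updated information state `ω^{a,s}`. -/
def nextState {n : ℕ} (p01 p11 : ℝ) (ω : Fin n → ℝ) (a : Finset (Fin n))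
    (s : {i // i ∈ a} → Bool) : Fin n → ℝ :=
  fun j => if h : j ∈ a then (if s ⟨j, h⟩ then p11 else p01) else tauF p01 p11 (ω j)

/-- The probability of the realization `s` of the selected channels `a`. -/
def obsProb {n : ℕ} (ω : Fin n → ℝ) (a : Finset (Fin n))
    (s : {i // i ∈ a} → Bool) : ℝ :=
  ∏ i : {i // i ∈ a}, if s i then ω i.val else 1 - ω i.val

/-- The optimal value functions `V`, indexed by the number of remaining steps. -/
def Vval (n k : ℕ) (hk : k ≤ n) (p01 p11 β : ℝ) : ℕ → (Fin n → ℝ) → ℝ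
  | 0, ω => (actions n k).sup' (actions_nonempty hk) fun a => ∑ i ∈ a, ω i
  | r + 1, ω =>
      (actions n k).sup' (actions_nonempty hk) fun a =>
        (∑ i ∈ a, ω i) +
          β * ∑ s : {i // i ∈ a} → Bool,
            obsProb ω a s * Vval n k hk p01 p11 β r (nextState p01 p11 ω a s)

/-- `Q_t(ω, a)`: the value of taking action `a` now and acting optimally
afterwards, indexed by the number of remaining steps. -/
def Qval (n k : ℕ) (hk : k ≤ n) (p01 p11 β : ℝ) : ℕ → (Fin n → ℝ) → Finset (Fin n) → ℝ
  | 0, ω, a => ∑ i ∈ a, ω i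
  | r + 1, ω, a =>
      (∑ i ∈ a, ω i) +
        β * ∑ s : {i // i ∈ a} → Bool,
          obsProb ω a s * Vval n k hk p01 p11 β r (nextState p01 p11 ω a s)

/-- Replace the coordinates in positions `j` and `j+1` (`0`-indexed) by `x` and `y`. -/
def upd2 {n : ℕ} (ω : Fin n → ℝ) (j : ℕ) (hj : j + 1 < n) (x y : ℝ) : Fin n → ℝ :=
  Function.update (Function.update ω ⟨j, by omega⟩ x) ⟨j + 1, hj⟩ y

/-- The cyclic shift `(ω_2, …, ω_n, ω_1)`. -/
def cyc {n : ℕ} (hn : 0 < n) (ω : Fin n → ℝ) : Fin n → ℝ :=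
  fun j => ω ⟨(j.val + 1) % n, Nat.mod_lt _ hn⟩

end

noncomputable section AuxProof

open Finset

variable {n k : ℕ}

def topIdx (hkn : k ≤ n) (i : Fin k) : Fin n := ⟨n - k + i.val, by omega⟩

lemma topIdx_inj (hkn : k ≤ n) : Function.Injective (topIdx hkn) := by
  intro a b h
  have h2 := congrArg Fin.val h
  simp only [topIdx] at h2
  exact Fin.ext (by omega)

def aSet (hkn : k ≤ n) (σ : Equiv.Perm (Fin n)) : Finset (Fin n) :=
  Finset.image (fun i => σ (topIdx hkn i)) Finset.univ

lemma aSet_mem_actions (hkn : k ≤ n) (σ : Equiv.Perm (Fin n)) : aSet hkn σ ∈ actions n k := by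
  rw [actions, Finset.mem_powersetCard]
  refine ⟨Finset.subset_univ _, ?_⟩
  rw [aSet, Finset.card_image_of_injective _
    (fun a b hab => topIdx_inj hkn (σ.injective hab) : Function.Injective fun i => σ (topIdx hkn i))]
  simp

def eEquiv (hkn : k ≤ n) (σ : Equiv.Perm (Fin n)) : Fin k ≃ {x // x ∈ aSet hkn σ} :=
  Equiv.ofBijective
    (fun i => ⟨σ (topIdx hkn i), Finset.mem_image.mpr ⟨i, Finset.mem_univ i, rfl⟩⟩)
    (by
      constructor
      · intro a b h
        exact topIdx_inj hkn (σ.injective (congrArg Subtype.val h))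
      · rintro ⟨x, hx⟩
        obtain ⟨i, -, rfl⟩ := Finset.mem_image.mp hx
        exact ⟨i, rfl⟩)

def sFor (hkn : k ≤ n) (σ : Equiv.Perm (Fin n)) (l : Fin k → Bool)
    (x : {i // i ∈ aSet hkn σ}) : Bool :=
  if h : n - k ≤ (σ.symm x.val).val then
    l ⟨(σ.symm x.val).val - (n - k), by have := (σ.symm x.val).isLt; omega⟩
  else true

lemma sFor_eq (hkn : k ≤ n) (σ : Equiv.Perm (Fin n)) (l : Fin k → Bool)
    (x : {i // i ∈ aSet hkn σ}) (i : Fin k) (hx : x.val = σ (topIdx hkn i)) :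
    sFor hkn σ l x = l i := by
  have hs : σ.symm x.val = topIdx hkn i := by rw [hx]; exact σ.symm_apply_apply _
  unfold sFor
  simp only [hs]
  rw [dif_pos (by simp [topIdx])]
  congr 1
  apply Fin.ext
  simp [topIdx]

lemma countTrue_le (l : Fin k → Bool) : countTrue l ≤ k := by
  rw [countTrue]
  calc (Finset.univ.filter fun i => l i = true).card
      ≤ (Finset.univ : Finset (Fin k)).card := Finset.card_filter_le _ _
    _ = k := by simp

lemma card_false (l : Fin k → Bool) :
    (Finset.univ.filter fun i => l i = false).card = k - countTrue l := by
  have h := Finset.card_filter_add_card_filter_not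
    (s := (Finset.univ : Finset (Fin k))) (p := fun i => l i = true)
  simp only [Bool.not_eq_true, Finset.card_univ, Fintype.card_fin] at h
  rw [countTrue]
  omega

def Fiso (l : Fin k → Bool) :
    Fin (k - countTrue l) ≃o {x // x ∈ Finset.univ.filter fun i => l i = false} :=
  (Finset.univ.filter fun i => l i = false).orderIsoOfFin (card_false l)

def Tiso (l : Fin k → Bool) :
    Fin (countTrue l) ≃o {x // x ∈ Finset.univ.filter fun i => l i = true} :=
  (Finset.univ.filter fun i => l i = true).orderIsoOfFin rfl

lemma Fiso_false (l : Fin k → Bool) (x : Fin (k - countTrue l)) :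
    l ((Fiso l x).val) = false := by
  have := (Fiso l x).property
  simpa using (Finset.mem_filter.mp this).2

lemma Tiso_true (l : Fin k → Bool) (x : Fin (countTrue l)) :
    l ((Tiso l x).val) = true := by
  have := (Tiso l x).property
  simpa using (Finset.mem_filter.mp this).2

lemma FT_ne (l : Fin k → Bool) (x : Fin (k - countTrue l)) (y : Fin (countTrue l)) :
    (Fiso l x).val ≠ (Tiso l y).val := by
  intro h
  have hf := Fiso_false l x
  have ht := Tiso_true l y
  rw [h, ht] at hf
  cases hf

def piFun (hkn : k ≤ n) (σ : Equiv.Perm (Fin n)) (l : Fin k → Bool) : Fin n → Fin n := fun j =>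
  if h1 : j.val < k - countTrue l then
    σ (topIdx hkn ((Fiso l ⟨j.val, h1⟩).val))
  else if h2 : j.val < n - countTrue l then
    σ ⟨j.val - (k - countTrue l), by have := j.isLt; omega⟩
  else
    σ (topIdx hkn ((Tiso l ⟨j.val - (n - countTrue l), by
      have := j.isLt; have := countTrue_le l; omega⟩).val))

lemma piFun_inj (hkn : k ≤ n) (σ : Equiv.Perm (Fin n)) (l : Fin k → Bool) :
    Function.Injective (piFun hkn σ l) := by
  have hm := countTrue_le l
  intro j1 j2 h
  simp only [piFun] at h
  apply Fin.ext
  have hlt1 := j1.isLt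
  have hlt2 := j2.isLt
  by_cases h1 : j1.val < k - countTrue l <;> by_cases h2 : j2.val < k - countTrue l
  · rw [dif_pos h1, dif_pos h2] at h
    have h3 := topIdx_inj hkn (σ.injective h)
    have h4 := (Fiso l).injective (Subtype.ext h3)
    injection h4
  · rw [dif_pos h1, dif_neg h2] at h
    by_cases h2' : j2.val < n - countTrue l
    · rw [dif_pos h2'] at h
      have hv := congrArg Fin.val (σ.injective h)
      simp only [topIdx] at hv
      omega
    · rw [dif_neg h2'] at h
      have h3 := topIdx_inj hkn (σ.injective h)
      exact absurd h3 (FT_ne l _ _)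
  · rw [dif_neg h1, dif_pos h2] at h
    by_cases h1' : j1.val < n - countTrue l
    · rw [dif_pos h1'] at h
      have hv := congrArg Fin.val (σ.injective h)
      simp only [topIdx] at hv
      omega
    · rw [dif_neg h1'] at h
      have h3 := topIdx_inj hkn (σ.injective h)
      exact absurd h3.symm (FT_ne l _ _)
  · rw [dif_neg h1, dif_neg h2] at h
    by_cases h1' : j1.val < n - countTrue l <;> by_cases h2' : j2.val < n - countTrue l
    · rw [dif_pos h1', dif_pos h2'] at h
      have hv := congrArg Fin.val (σ.injective h)
      simp only at hv
      omega
    · rw [dif_pos h1', dif_neg h2'] at h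
      have hv := congrArg Fin.val (σ.injective h)
      simp only [topIdx] at hv
      omega
    · rw [dif_neg h1', dif_pos h2'] at h
      have hv := congrArg Fin.val (σ.injective h)
      simp only [topIdx] at hv
      omega
    · rw [dif_neg h1', dif_neg h2'] at h
      have h3 := topIdx_inj hkn (σ.injective h)
      have h4 := (Tiso l).injective (Subtype.ext h3)
      injection h4 with h5
      omega

lemma nextState_pi (hkn : k ≤ n) (σ : Equiv.Perm (Fin n)) (l : Fin k → Bool)
    (p01 p11 : ℝ) (ω : Fin n → ℝ) (j : Fin n) :
    nextState p01 p11 ω (aSet hkn σ) (sFor hkn σ l) (piFun hkn σ l j)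
      = vl k p01 p11 (ω ∘ σ) (countTrue l) j := by
  have hm := countTrue_le l
  have hlt := j.isLt
  simp only [piFun, vl]
  by_cases h1 : j.val < k - countTrue l
  · rw [dif_pos h1, if_pos h1]
    have hmem : σ (topIdx hkn ((Fiso l ⟨j.val, h1⟩).val)) ∈ aSet hkn σ :=
      Finset.mem_image.mpr ⟨_, Finset.mem_univ _, rfl⟩
    simp only [nextState]
    rw [dif_pos hmem, sFor_eq hkn σ l ⟨_, hmem⟩ _ rfl]
    have hgen : ∀ (x : Fin (k - countTrue l)),
        (if l ((Fiso l x).val) = true then p11 else p01) = p01 := by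
      intro x
      rw [Fiso_false l x]
      simp
    exact hgen _
  · rw [dif_neg h1, if_neg h1]
    by_cases h2 : j.val < n - countTrue l
    · rw [dif_pos h2, if_pos h2]
      have hnot : ∀ (p : j.val - (k - countTrue l) < n),
          σ ⟨j.val - (k - countTrue l), p⟩ ∉ aSet hkn σ := by
        intro p hmem
        obtain ⟨i, -, hi⟩ := Finset.mem_image.mp hmem
        have hv := congrArg Fin.val (σ.injective hi)
        simp only [topIdx] at hv
        omega
      simp only [nextState]
      rw [dif_neg (hnot _)]
      rfl
    · rw [dif_neg h2, if_neg h2]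
      have hmem : σ (topIdx hkn ((Tiso l ⟨j.val - (n - countTrue l), by omega⟩).val))
          ∈ aSet hkn σ := Finset.mem_image.mpr ⟨_, Finset.mem_univ _, rfl⟩
      simp only [nextState]
      rw [dif_pos hmem, sFor_eq hkn σ l ⟨_, hmem⟩ _ rfl]
      have hgen : ∀ (x : Fin (countTrue l)),
          (if l ((Tiso l x).val) = true then p11 else p01) = p11 := by
        intro x
        rw [Tiso_true l x]
        simp
      exact hgen _

lemma obsProb_eq (hkn : k ≤ n) (σ : Equiv.Perm (Fin n)) (l : Fin k → Bool) (ω : Fin n → ℝ) :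
    obsProb ω (aSet hkn σ) (sFor hkn σ l) = qProb (topCoords hkn (ω ∘ σ)) l := by
  unfold obsProb qProb
  rw [← Equiv.prod_comp (eEquiv hkn σ)
    (fun x => if sFor hkn σ l x then ω x.val else 1 - ω x.val)]
  apply Finset.prod_congr rfl
  intro i _
  rw [sFor_eq hkn σ l (eEquiv hkn σ i) i rfl]
  rfl

lemma sFor_arrowCongr (hkn : k ≤ n) (σ : Equiv.Perm (Fin n)) (l : Fin k → Bool) :
    (Equiv.arrowCongr (eEquiv hkn σ) (Equiv.refl Bool)) l = sFor hkn σ l := by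
  funext x
  show l ((eEquiv hkn σ).symm x) = _
  exact (sFor_eq hkn σ l x ((eEquiv hkn σ).symm x)
    (congrArg Subtype.val ((eEquiv hkn σ).apply_symm_apply x)).symm).symm

lemma sum_top (hkn : k ≤ n) (f : Fin n → ℝ) :
    (∑ i : Fin n, if n - k ≤ i.val then f i else 0) = ∑ i : Fin k, f (topIdx hkn i) := by
  have himg : Finset.univ.filter (fun i : Fin n => n - k ≤ i.val)
      = Finset.image (topIdx hkn) Finset.univ := by
    ext x
    simp only [Finset.mem_filter, Finset.mem_image, Finset.mem_univ, true_and]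
    constructor
    · intro hx
      exact ⟨⟨x.val - (n - k), by have := x.isLt; omega⟩, by
        apply Fin.ext; simp only [topIdx]; omega⟩
    · rintro ⟨i, rfl⟩
      simp [topIdx]
  rw [← Finset.sum_filter, himg,
    Finset.sum_image (fun a _ b _ hab => topIdx_inj hkn hab)]

lemma tauF_mem {p01 p11 w : ℝ} (h1 : p01 ∈ Set.Icc (0:ℝ) 1) (h2 : p11 ∈ Set.Icc (0:ℝ) 1)
    (hw : w ∈ Set.Icc (0:ℝ) 1) : tauF p01 p11 w ∈ Set.Icc (0:ℝ) 1 := by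
  obtain ⟨a, b⟩ := h1; obtain ⟨c, d⟩ := h2; obtain ⟨e, f⟩ := hw
  unfold tauF
  constructor
  · nlinarith
  · nlinarith

lemma nextState_mem {p01 p11 : ℝ} (h1 : p01 ∈ Set.Icc (0:ℝ) 1) (h2 : p11 ∈ Set.Icc (0:ℝ) 1)
    {ω : Fin n → ℝ} (hω : ∀ i, ω i ∈ Set.Icc (0:ℝ) 1) (a : Finset (Fin n))
    (s : {i // i ∈ a} → Bool) : ∀ j, nextState p01 p11 ω a s j ∈ Set.Icc (0:ℝ) 1 := by
  intro j
  unfold nextState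
  split_ifs
  · exact h2
  · exact h1
  · exact tauF_mem h1 h2 (hω j)

lemma qProb_nonneg {u : Fin k → ℝ} (hu : ∀ i, u i ∈ Set.Icc (0:ℝ) 1) (l : Fin k → Bool) :
    0 ≤ qProb u l := by
  unfold qProb
  apply Finset.prod_nonneg
  intro i _
  split_ifs
  · exact (hu i).1
  · linarith [(hu i).2]

lemma main_ind (hkn : k ≤ n) (p01 p11 β : ℝ)
    (hp01 : p01 ∈ Set.Icc (0:ℝ) 1) (hp11 : p11 ∈ Set.Icc (0:ℝ) 1)
    (hβ : β ∈ Set.Icc (0:ℝ) 1) :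
    ∀ (r : ℕ) (ω : Fin n → ℝ), (∀ i, ω i ∈ Set.Icc (0:ℝ) 1) → ∀ σ : Equiv.Perm (Fin n),
      Wval n k hkn p01 p11 β r (ω ∘ σ) ≤ Vval n k hkn p01 p11 β r ω := by
  intro r
  induction r with
  | zero =>
    intro ω hω σ
    simp only [Wval, Vval]
    have h1 : (∑ i : Fin n, if n - k ≤ i.val then (ω ∘ σ) i else 0)
        = ∑ i ∈ aSet hkn σ, ω i := by
      rw [sum_top hkn, aSet,
        Finset.sum_image (fun a _ b _ hab => topIdx_inj hkn (σ.injective hab))]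
      rfl
    rw [h1]
    exact Finset.le_sup' (fun a => ∑ i ∈ a, ω i) (aSet_mem_actions hkn σ)
  | succ r ih =>
    intro ω hω σ
    simp only [Wval, Vval]
    refine le_trans ?_ (Finset.le_sup'
      (fun a => (∑ i ∈ a, ω i) + β * ∑ s : {i // i ∈ a} → Bool,
        obsProb ω a s * Vval n k hkn p01 p11 β r (nextState p01 p11 ω a s))
      (aSet_mem_actions hkn σ))
    show (∑ i : Fin n, if n - k ≤ i.val then (ω ∘ σ) i else 0) +
        β * (∑ l : Fin k → Bool, qProb (topCoords hkn (ω ∘ σ)) l *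
          Wval n k hkn p01 p11 β r (vl k p01 p11 (ω ∘ σ) (countTrue l))) ≤
      (∑ i ∈ aSet hkn σ, ω i) + β * ∑ s : {i // i ∈ aSet hkn σ} → Bool,
        obsProb ω (aSet hkn σ) s *
          Vval n k hkn p01 p11 β r (nextState p01 p11 ω (aSet hkn σ) s)
    have h1 : (∑ i : Fin n, if n - k ≤ i.val then (ω ∘ σ) i else 0)
        = ∑ i ∈ aSet hkn σ, ω i := by
      rw [sum_top hkn, aSet,
        Finset.sum_image (fun a _ b _ hab => topIdx_inj hkn (σ.injective hab))]
      rfl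
    rw [h1]
    apply add_le_add_right
    apply mul_le_mul_of_nonneg_left ?_ hβ.1
    rw [← Equiv.sum_comp (Equiv.arrowCongr (eEquiv hkn σ) (Equiv.refl Bool))
      (fun s => obsProb ω (aSet hkn σ) s
        * Vval n k hkn p01 p11 β r (nextState p01 p11 ω (aSet hkn σ) s))]
    apply Finset.sum_le_sum
    intro l _
    simp only [sFor_arrowCongr hkn σ l]
    rw [obsProb_eq hkn σ l ω]
    apply mul_le_mul_of_nonneg_left ?_ (qProb_nonneg (fun i => hω (σ (topIdx hkn i))) l)
    have hfun : vl k p01 p11 (ω ∘ σ) (countTrue l)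
        = (nextState p01 p11 ω (aSet hkn σ) (sFor hkn σ l))
          ∘ (Equiv.ofBijective _ ((Finite.injective_iff_bijective).mp (piFun_inj hkn σ l))) := by
      funext j
      exact (nextState_pi hkn σ l p01 p11 ω j).symm
    rw [hfun]
    exact ih (nextState p01 p11 ω (aSet hkn σ) (sFor hkn σ l))
      (nextState_mem hp01 hp11 hω _ _) _

end AuxProof

/-- For every `β ∈ [0,1]`, `p01, p11 ∈ [0,1]` (no ordering
assumption), every `t ∈ {1,…,T}`, every `ω ∈ [0,1]^n`, and every permutation
`σ`, the optimal value dominates the `W`-recursion at any rearrangement: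
`V_t(ω) ≥ W_t(ω_{σ(1)},…,ω_{σ(n)})`. -/
theorem optimal_value_ge_W_of_any_rearrangement
    (n k T : ℕ) (hk1 : 1 ≤ k) (hkn : k ≤ n) (hT : 1 ≤ T)
    (p01 p11 β : ℝ)
    (hp01 : p01 ∈ Set.Icc (0:ℝ) 1) (hp11 : p11 ∈ Set.Icc (0:ℝ) 1)
    (hβ : β ∈ Set.Icc (0:ℝ) 1)
    (t : ℕ) (ht1 : 1 ≤ t) (ht2 : t ≤ T)
    (ω : Fin n → ℝ) (hω : ∀ i, ω i ∈ Set.Icc (0:ℝ) 1)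
    (σ : Equiv.Perm (Fin n)) :
    Vval n k hkn p01 p11 β (T - t) ω ≥
      Wval n k hkn p01 p11 β (T - t) (ω ∘ σ) := by
  exact main_ind hkn p01 p11 β hp01 hp11 hβ (T - t) ω hω σ
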